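/- Let ε > 0 and 0 < c < 1/(8ε), and set z_max := √((1-√(1-8cε))/(2ε)). Then 4 ∫₀^{z_max} dz / √(2c - z² + εz⁴) = 2^{5/2} / √(1+√(1-8cε)) · K((1-√(1-8cε))/(1+√(1-8cε))); equivalently, this quantity equals 2^{5/2} Φ(8cε). (This is the period τ²_ε(c) of the bounded periodic orbit of energy c of the Hamiltonian E²_ε(z₂,w₂) = w₂²/2 + z₂²/2 - εz₂⁴/2.) -/

import Mathlib

/-- The complete elliptic integral of the first kind,
`K(m) = ∫₀¹ dζ / √((1-ζ²)(1-mζ²))`, defined for `m < 1`. -/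
noncomputable def ellipticK (m : ℝ) : ℝ :=
  ∫ ζ in (0:ℝ)..1, 1 / Real.sqrt ((1 - ζ ^ 2) * (1 - m * ζ ^ 2))

/-- `Φ(x) = K((1-√(1-x))/(1+√(1-x))) / √(1+√(1-x))`, defined for `x < 1`. -/
noncomputable def Phi (x : ℝ) : ℝ :=
  ellipticK ((1 - Real.sqrt (1 - x)) / (1 + Real.sqrt (1 - x))) /
    Real.sqrt (1 + Real.sqrt (1 - x))

/-- The period `τ²_ε(c) = 4 ∫₀^{z_max} dz/√(2c - z² + εz⁴)` of the bounded periodic orbit of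
energy `0 < c < 1/(8ε)` of the Hamiltonian `E²_ε(z₂,w₂) = w₂²/2 + z₂²/2 - εz₂⁴/2` equals
`2^{5/2}/√(1+√(1-8cε)) · K((1-√(1-8cε))/(1+√(1-8cε)))`, i.e. equals `2^{5/2} Φ(8cε)`. -/
theorem period_tau2 (ε c : ℝ) (hε : 0 < ε) (hc : 0 < c) (hc' : c < 1 / (8 * ε)) :
    (4 * ∫ z in (0:ℝ)..Real.sqrt ((1 - Real.sqrt (1 - 8 * c * ε)) / (2 * ε)),
        1 / Real.sqrt (2 * c - z ^ 2 + ε * z ^ 4)) =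
      (2:ℝ) ^ ((5:ℝ) / 2) / Real.sqrt (1 + Real.sqrt (1 - 8 * c * ε)) *
        ellipticK ((1 - Real.sqrt (1 - 8 * c * ε)) / (1 + Real.sqrt (1 - 8 * c * ε))) ∧
    (4 * ∫ z in (0:ℝ)..Real.sqrt ((1 - Real.sqrt (1 - 8 * c * ε)) / (2 * ε)),
        1 / Real.sqrt (2 * c - z ^ 2 + ε * z ^ 4)) =
      (2:ℝ) ^ ((5:ℝ) / 2) * Phi (8 * c * ε) := by
  have h8 : 8 * c * ε < 1 := by
    have h := (lt_div_iff₀ (by positivity : (0:ℝ) < 8 * ε)).mp hc'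
    nlinarith
  set s := Real.sqrt (1 - 8 * c * ε) with hs
  have hs2 : s ^ 2 = 1 - 8 * c * ε := Real.sq_sqrt (by linarith)
  have hs0 : 0 < s := Real.sqrt_pos.mpr (by nlinarith)
  have hs1 : s < 1 := by nlinarith
  have h1s : (0:ℝ) < 1 - s := by linarith
  have h1s' : (0:ℝ) < 1 + s := by linarith
  set a := Real.sqrt ((1 - s) / (2 * ε)) with ha
  have ha2 : a ^ 2 = (1 - s) / (2 * ε) := Real.sq_sqrt (by positivity)
  have ha0 : 0 < a := Real.sqrt_pos.mpr (by positivity)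
  set m := (1 - s) / (1 + s) with hm
  set f : ℝ → ℝ := fun z => 1 / Real.sqrt (2 * c - z ^ 2 + ε * z ^ 4) with hf
  -- substitution
  have hsub : (∫ z in (0:ℝ)..a, f z) = a * ∫ ζ in (0:ℝ)..1, f (ζ * a) := by
    rw [intervalIntegral.integral_comp_mul_right f ha0.ne']
    simp [smul_eq_mul, mul_inv_cancel_left₀ ha0.ne']
  -- pointwise identity
  have hpt : ∀ ζ : ℝ, f (ζ * a)
      = (Real.sqrt (2 * c))⁻¹ * (1 / Real.sqrt ((1 - ζ ^ 2) * (1 - m * ζ ^ 2))) := by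
    intro ζ
    have key : 2 * c - (ζ * a) ^ 2 + ε * (ζ * a) ^ 4
        = (2 * c) * ((1 - ζ ^ 2) * (1 - m * ζ ^ 2)) := by
      have h4 : (ζ * a) ^ 2 = ζ ^ 2 * ((1 - s) / (2 * ε)) := by rw [mul_pow, ha2]
      have h5 : (ζ * a) ^ 4 = ζ ^ 4 * ((1 - s) / (2 * ε)) ^ 2 := by
        rw [show (ζ*a)^4 = ((ζ*a)^2)^2 by ring, h4]; ring
      rw [h4, h5, hm]
      field_simp
      linear_combination (ζ^2 * (2 - (1 - s) * ζ^2)) * hs2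
    rw [hf]
    simp only
    rw [key, Real.sqrt_mul (by positivity : (0:ℝ) ≤ 2 * c), one_div, mul_inv, one_div]
  have hKint : (∫ ζ in (0:ℝ)..1, f (ζ * a))
      = (Real.sqrt (2 * c))⁻¹ * ellipticK m := by
    simp only [hpt]
    rw [intervalIntegral.integral_const_mul, ellipticK]
  have h32 : (2:ℝ) ^ ((5:ℝ)/2) = Real.sqrt 32 := by
    rw [Real.sqrt_eq_rpow, show (32:ℝ) = 2 ^ (5:ℕ) by norm_num,
      ← Real.rpow_natCast 2 5, ← Real.rpow_mul (by norm_num)]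
    norm_num
  have hconst : 4 * (a * (Real.sqrt (2 * c))⁻¹) = (2:ℝ) ^ ((5:ℝ)/2) / Real.sqrt (1 + s) := by
    rw [h32, ha, ← Real.sqrt_inv, ← Real.sqrt_mul (by positivity),
      show (4:ℝ) = Real.sqrt 16 by rw [show (16:ℝ) = 4^2 by norm_num, Real.sqrt_sq]; norm_num,
      ← Real.sqrt_mul (by norm_num), ← Real.sqrt_div' 32 (by positivity)]
    congr 1
    rw [div_eq_div_iff (by positivity) (by positivity)] at *
    field_simp
    linear_combination (-16) * hs2
  have main : (4 * ∫ z in (0:ℝ)..a, f z)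
      = (2:ℝ) ^ ((5:ℝ)/2) / Real.sqrt (1 + s) * ellipticK m := by
    rw [hsub, hKint, ← hconst]; ring
  refine ⟨main, ?_⟩
  rw [main, Phi, ← hs, ← hm]
  ring
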